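/- arXiv:1708.06536 — 6 statements merged into one kernel-verified Lean document; each statement's English description precedes it below -/
import Mathlib

section
/- Let g be a Lie superalgebra over ℂ with an even, supersymmetric, invariant bilinear form (·,·), graded by eigenvalues of ad h for an sl2-triple (e,h,f) with (e,f)=1, such that g(2)=ℂe and g(−2)=ℂf. Then for every x ∈ g(0), one has [e,x]=0 if and only if (h,x)=0. -/
theorem stmt2
    {L : Type*} [AddCommGroup L] [Module ℂ L]
    (br : L →ₗ[ℂ] L →ₗ[ℂ] L)
    (Lp : ZMod 2 → Submodule ℂ L)
    (hcompl : IsCompl (Lp 0) (Lp 1))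
    (hbrp : ∀ (i j : ZMod 2), ∀ x ∈ Lp i, ∀ y ∈ Lp j, br x y ∈ Lp (i + j))
    (hskew : ∀ (i j : ZMod 2), ∀ x ∈ Lp i, ∀ y ∈ Lp j,
      br x y = -(((-1 : ℂ) ^ (i * j).val) • br y x))
    (hJac : ∀ (i j : ZMod 2), ∀ x ∈ Lp i, ∀ y ∈ Lp j, ∀ w : L,
      br (br x y) w = br x (br y w) - ((-1 : ℂ) ^ (i * j).val) • br y (br x w))
    (B : L →ₗ[ℂ] L →ₗ[ℂ] ℂ)
    (hBeven : ∀ x ∈ Lp 0, ∀ y ∈ Lp 1, B x y = 0 ∧ B y x = 0)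
    (hBsuper : ∀ (i j : ZMod 2), ∀ x ∈ Lp i, ∀ y ∈ Lp j,
      B x y = ((-1 : ℂ) ^ (i * j).val) * B y x)
    (hBinv : ∀ a b c : L, B (br a b) c = B a (br b c))
    (e h f : L) (hep : e ∈ Lp 0) (hhp : h ∈ Lp 0) (hfp : f ∈ Lp 0)
    (hef : br e f = h) (hhe : br h e = (2 : ℂ) • e) (hhf : br h f = (-2 : ℂ) • f)
    (hBef : B e f = 1)
    (hg2span : ∀ x : L, br h x = (2 : ℂ) • x → x ∈ Submodule.span ℂ ({e} : Set L))
    (hgm2span : ∀ x : L, br h x = (-2 : ℂ) • x → x ∈ Submodule.span ℂ ({f} : Set L))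
    :
    ∀ x : L, br h x = 0 → (br e x = 0 ↔ B h x = 0) := by
  intro x hx
  have he0 : e ≠ 0 := by
    intro h0; rw [h0] at hBef; simp at hBef
  have hh0 : h ≠ 0 := by
    intro h0
    have h2 : (2 : ℂ) • e = 0 := by rw [← hhe, h0]; simp
    rcases smul_eq_zero.mp h2 with h1 | h1
    · norm_num at h1
    · exact he0 h1
  have hval : (((0 : ZMod 2) * 0).val) = 0 := rfl
  -- br h (br e x) = 2 • br e x
  have hJ1 := hJac 0 0 h hhp e hep x
  rw [hval] at hJ1
  simp only [pow_zero, one_smul, hhe, hx, map_zero, sub_zero, map_smul,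
    LinearMap.smul_apply] at hJ1
  obtain ⟨c, hc⟩ := Submodule.mem_span_singleton.mp (hg2span _ hJ1.symm)
  -- br h (br f x) = -2 • br f x
  have hJ2 := hJac 0 0 h hhp f hfp x
  rw [hval] at hJ2
  simp only [pow_zero, one_smul, hhf, hx, map_zero, sub_zero, map_smul,
    LinearMap.smul_apply] at hJ2
  obtain ⟨d, hd⟩ := Submodule.mem_span_singleton.mp (hgm2span _ hJ2.symm)
  -- br f e = -h
  have hfe : br f e = -h := by
    have hsk := hskew 0 0 e hep f hfp
    rw [hval] at hsk
    simp only [pow_zero, one_smul, hef] at hsk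
    linear_combination (norm := module) hsk
  -- Jacobi with f, e
  have hJ3 := hJac 0 0 f hfp e hep x
  rw [hval] at hJ3
  simp only [pow_zero, one_smul, hfe, hx] at hJ3
  rw [← hc, ← hd] at hJ3
  simp only [map_smul, map_neg, LinearMap.neg_apply, hfe, hef, smul_neg, map_zero] at hJ3
  rw [hx] at hJ3
  -- hJ3 : -0 = -(c • h) - d • h  or similar
  have hch : (c + d) • h = 0 := by
    have h4 : -(c • h) - d • h = 0 := by linear_combination (norm := module) -hJ3
    linear_combination (norm := module) -h4
  have hcd : d = -c := by
    rcases smul_eq_zero.mp hch with h1 | h1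
    · linear_combination h1
    · exact absurd h1 hh0
  -- B h x = d
  have hBhx : B h x = d := by
    rw [← hef, hBinv, ← hd]
    simp [hBef]
  rw [hBhx, ← hc, hcd]
  constructor
  · intro h1
    rcases smul_eq_zero.mp h1 with h1 | h1
    · simp [h1]
    · exact absurd h1 he0
  · intro h1
    have hc0 : c = 0 := neg_eq_zero.mp h1
    simp [hc0]
end

section
/- Let g be a Lie superalgebra over ℂ with sl2-triple (e,h,f), minimal grading by ad h (g(i)=0 for |i|>2, g(±2) one-dimensional spanned by e, f), and dual homogeneous bases {z_α}, {z_α*} of g(−1) with respect to ⟨x,y⟩=(e,[x,y]). Then Σ_{α∈S(−1)} [z_α, [e, z_α*]] = ((r−s)/2)·h, where s = dim g(−1)_0̄ and r = dim g(−1)_1̄. -/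
theorem stmt9
    {L : Type*} [AddCommGroup L] [Module ℂ L]
    (br : L →ₗ[ℂ] L →ₗ[ℂ] L)
    (Lp : ZMod 2 → Submodule ℂ L)
    (hcompl : IsCompl (Lp 0) (Lp 1))
    (hbrp : ∀ (i j : ZMod 2), ∀ x ∈ Lp i, ∀ y ∈ Lp j, br x y ∈ Lp (i + j))
    (hskew : ∀ (i j : ZMod 2), ∀ x ∈ Lp i, ∀ y ∈ Lp j,
      br x y = -(((-1 : ℂ) ^ (i * j).val) • br y x))
    (hJac : ∀ (i j : ZMod 2), ∀ x ∈ Lp i, ∀ y ∈ Lp j, ∀ w : L,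
      br (br x y) w = br x (br y w) - ((-1 : ℂ) ^ (i * j).val) • br y (br x w))
    (B : L →ₗ[ℂ] L →ₗ[ℂ] ℂ)
    (hBeven : ∀ x ∈ Lp 0, ∀ y ∈ Lp 1, B x y = 0 ∧ B y x = 0)
    (hBsuper : ∀ (i j : ZMod 2), ∀ x ∈ Lp i, ∀ y ∈ Lp j,
      B x y = ((-1 : ℂ) ^ (i * j).val) * B y x)
    (hBinv : ∀ a b c : L, B (br a b) c = B a (br b c))
    (e h f : L) (hep : e ∈ Lp 0) (hhp : h ∈ Lp 0) (hfp : f ∈ Lp 0)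
    (hef : br e f = h) (hhe : br h e = (2 : ℂ) • e) (hhf : br h f = (-2 : ℂ) • f)
    (hBef : B e f = 1)
    {ι : Type*} [Fintype ι] [DecidableEq ι]
    (p : ι → ZMod 2) (z zstar : ι → L)
    (hz : ∀ i, z i ∈ Lp (p i)) (hzs : ∀ i, zstar i ∈ Lp (p i))
    (hzdeg : ∀ i, br h (z i) = (-1 : ℂ) • z i)
    (hzsdeg : ∀ i, br h (zstar i) = (-1 : ℂ) • zstar i)
    (hdual : ∀ i j, B e (br (zstar i) (z j)) = if i = j then (1 : ℂ) else 0)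
    (hm2span : ∀ x y : L, br h x = (-1 : ℂ) • x → br h y = (-1 : ℂ) • y →
      br x y ∈ Submodule.span ℂ ({f} : Set L))
    (τ : ι → ι) (hτinv : ∀ i, τ (τ i) = i) (hτp : ∀ i, p (τ i) = p i)
    (hτ1 : ∀ i, zstar i = z (τ i))
    (hτ2 : ∀ i, zstar (τ i) = -(((-1 : ℂ) ^ (p i).val) • z i))
    (hexp : ∀ u : L, br h u = (-1 : ℂ) • u → u = ∑ i, B e (br (zstar i) u) • z i)
    :
    ∑ i, br (z i) (br e (zstar i)) =
      ((((Finset.univ.filter fun i => p i = 1).card : ℂ) -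
        ((Finset.univ.filter fun i => p i = 0).card : ℂ)) / 2) • h := by
  classical
  have hpp : ∀ a : ZMod 2, a * a = a := by decide
  have hp0 : ∀ a : ZMod 2, a * 0 = 0 := by decide
  set A := ∑ i, br (z i) (br e (zstar i)) with hA
  -- [z i, zstar i] = c_i • f with c_i = -(-1)^(p i).val
  have hczf : ∀ i, br (z i) (zstar i) = (-((-1:ℂ) ^ (p i).val)) • f := by
    intro i
    obtain ⟨c, hc⟩ := Submodule.mem_span_singleton.mp
      (hm2span (z i) (zstar i) (hzdeg i) (hzsdeg i))
    have h1 : br (z i) (zstar i) = -(((-1:ℂ) ^ (p i).val) • br (zstar i) (z i)) := by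
      have := hskew (p i) (p i) (z i) (hz i) (zstar i) (hzs i)
      rwa [hpp] at this
    have h2 : B e (br (z i) (zstar i)) = -((-1:ℂ) ^ (p i).val) := by
      rw [h1]; simp [hdual i i]
    have h3 : B e (br (z i) (zstar i)) = c := by
      rw [← hc]; simp [hBef]
    rw [← hc, h3.symm.trans h2]
  -- Jacobi rewriting of each term
  have hterm : ∀ i, br (z i) (br e (zstar i)) =
      br (br (z i) e) (zstar i) + (-((-1:ℂ) ^ (p i).val)) • h := by
    intro i
    have hJ := hJac (p i) 0 (z i) (hz i) e hep (zstar i)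
    rw [hp0] at hJ
    simp only [ZMod.val_zero, pow_zero, one_smul] at hJ
    have : br e (br (z i) (zstar i)) = (-((-1:ℂ) ^ (p i).val)) • h := by
      rw [hczf i]; rw [map_smul, hef]
    rw [this] at hJ
    rw [hJ]; abel
  -- involution trick
  have hT : ∀ i, br (br (z (τ i)) e) (zstar (τ i)) = -(br (z i) (br e (zstar i))) := by
    intro i
    rw [← hτ1, hτ2]
    have h1 : br (zstar i) e = -(br e (zstar i)) := by
      have := hskew (p i) 0 (zstar i) (hzs i) e hep
      rw [hp0] at this
      simpa using this
    have hmem : br e (zstar i) ∈ Lp (p i) := by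
      have := hbrp 0 (p i) e hep (zstar i) (hzs i)
      rwa [zero_add] at this
    have h2 : br (br e (zstar i)) (z i) =
        -(((-1:ℂ) ^ (p i).val) • br (z i) (br e (zstar i))) := by
      have := hskew (p i) (p i) (br e (zstar i)) hmem (z i) (hz i)
      rwa [hpp] at this
    have hsq : ((-1:ℂ) ^ (p i).val) * ((-1:ℂ) ^ (p i).val) = 1 := by
      rw [← pow_add]
      exact Even.neg_one_pow ⟨(p i).val, rfl⟩
    rw [h1]
    simp only [map_neg, LinearMap.neg_apply, map_smul, LinearMap.smul_apply, h2,
      smul_neg, smul_smul, hsq, one_smul]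
    abel
  -- sum over the involution
  have hsum1 : ∑ i, br (br (z i) e) (zstar i) = -A := by
    have := Fintype.sum_equiv (Function.Involutive.toPerm τ hτinv)
      (fun i => br (br (z (τ i)) e) (zstar (τ i)))
      (fun i => br (br (z i) e) (zstar i)) (fun i => rfl)
    rw [← this]
    simp_rw [hT]
    rw [← Finset.sum_neg_distrib]
  -- counting sum
  have hcount : ∑ i, (-((-1:ℂ) ^ (p i).val)) =
      (((Finset.univ.filter fun i => p i = 1).card : ℂ) -
       ((Finset.univ.filter fun i => p i = 0).card : ℂ)) := by
    rw [← Finset.sum_filter_add_sum_filter_not Finset.univ (fun i => p i = 1)]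
    have e1 : ∀ i ∈ Finset.univ.filter (fun i => p i = 1),
        (-((-1:ℂ) ^ (p i).val)) = 1 := by
      intro i hi
      rw [Finset.mem_filter] at hi
      rw [hi.2, show (1 : ZMod 2).val = 1 from rfl]; norm_num
    have e0 : ∀ i ∈ Finset.univ.filter (fun i => ¬ p i = 1),
        (-((-1:ℂ) ^ (p i).val)) = -1 := by
      intro i hi
      rw [Finset.mem_filter] at hi
      have : p i = 0 := by
        have := hi.2; revert this; generalize p i = a; revert a; decide
      rw [this, show (0 : ZMod 2).val = 0 from rfl]; norm_num
    rw [Finset.sum_congr rfl e1, Finset.sum_congr rfl e0]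
    have hfe : (Finset.univ.filter fun i => ¬ p i = 1) =
        (Finset.univ.filter fun i => p i = 0) := by
      apply Finset.filter_congr
      intro i _
      constructor
      · intro hh; revert hh; generalize p i = a; revert a; decide
      · intro hh; rw [hh]; decide
    rw [hfe]
    simp [sub_eq_add_neg]
  -- conclude
  have key : A = -A + (((Finset.univ.filter fun i => p i = 1).card : ℂ) -
       ((Finset.univ.filter fun i => p i = 0).card : ℂ)) • h := by
    calc A = ∑ i, (br (br (z i) e) (zstar i) + (-((-1:ℂ) ^ (p i).val)) • h) := by
            rw [hA]; exact Finset.sum_congr rfl fun i _ => hterm i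
      _ = (∑ i, br (br (z i) e) (zstar i)) + (∑ i, (-((-1:ℂ) ^ (p i).val))) • h := by
            rw [Finset.sum_add_distrib, Finset.sum_smul]
      _ = -A + _ • h := by rw [hsum1, hcount]
  set c : ℂ := (((Finset.univ.filter fun i => p i = 1).card : ℂ) -
       ((Finset.univ.filter fun i => p i = 0).card : ℂ)) with hc
  have h2A : (2:ℂ) • A = c • h := by
    have : A + A = c • h := by
      nth_rewrite 1 [key]; abel
    rw [← this, two_smul]
  calc A = ((2:ℂ)⁻¹ * 2) • A := by norm_num
    _ = (2:ℂ)⁻¹ • ((2:ℂ) • A) := by rw [mul_smul]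
    _ = (c / 2) • h := by rw [h2A, smul_smul, div_eq_inv_mul]
end

section
/- Let g be a Lie superalgebra over ℂ with sl2-triple (e,h,f), minimal grading, dual homogeneous bases {z_α}, {z_α*} of g(−1) with respect to ⟨x,y⟩=(e,[x,y]), and let w ∈ g(1) satisfy [e,w]=0. Then Σ_{α∈S(−1)} [z_α, [z_α*, w]] = ((s−r)/2)·[w,f], where s = dim g(−1)_0̄ and r = dim g(−1)_1̄. -/
theorem stmt10
    {L : Type*} [AddCommGroup L] [Module ℂ L]
    (br : L →ₗ[ℂ] L →ₗ[ℂ] L)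
    (Lp : ZMod 2 → Submodule ℂ L)
    (hcompl : IsCompl (Lp 0) (Lp 1))
    (hbrp : ∀ (i j : ZMod 2), ∀ x ∈ Lp i, ∀ y ∈ Lp j, br x y ∈ Lp (i + j))
    (hskew : ∀ (i j : ZMod 2), ∀ x ∈ Lp i, ∀ y ∈ Lp j,
      br x y = -(((-1 : ℂ) ^ (i * j).val) • br y x))
    (hJac : ∀ (i j : ZMod 2), ∀ x ∈ Lp i, ∀ y ∈ Lp j, ∀ w : L,
      br (br x y) w = br x (br y w) - ((-1 : ℂ) ^ (i * j).val) • br y (br x w))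
    (B : L →ₗ[ℂ] L →ₗ[ℂ] ℂ)
    (hBeven : ∀ x ∈ Lp 0, ∀ y ∈ Lp 1, B x y = 0 ∧ B y x = 0)
    (hBsuper : ∀ (i j : ZMod 2), ∀ x ∈ Lp i, ∀ y ∈ Lp j,
      B x y = ((-1 : ℂ) ^ (i * j).val) * B y x)
    (hBinv : ∀ a b c : L, B (br a b) c = B a (br b c))
    (e h f : L) (hep : e ∈ Lp 0) (hhp : h ∈ Lp 0) (hfp : f ∈ Lp 0)
    (hef : br e f = h) (hhe : br h e = (2 : ℂ) • e) (hhf : br h f = (-2 : ℂ) • f)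
    (hBef : B e f = 1)
    {ι : Type*} [Fintype ι] [DecidableEq ι]
    (p : ι → ZMod 2) (z zstar : ι → L)
    (hz : ∀ i, z i ∈ Lp (p i)) (hzs : ∀ i, zstar i ∈ Lp (p i))
    (hzdeg : ∀ i, br h (z i) = (-1 : ℂ) • z i)
    (hzsdeg : ∀ i, br h (zstar i) = (-1 : ℂ) • zstar i)
    (hdual : ∀ i j, B e (br (zstar i) (z j)) = if i = j then (1 : ℂ) else 0)
    (hm2span : ∀ x y : L, br h x = (-1 : ℂ) • x → br h y = (-1 : ℂ) • y →
      br x y ∈ Submodule.span ℂ ({f} : Set L))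
    (τ : ι → ι) (hτinv : ∀ i, τ (τ i) = i) (hτp : ∀ i, p (τ i) = p i)
    (hτ1 : ∀ i, zstar i = z (τ i))
    (hτ2 : ∀ i, zstar (τ i) = -(((-1 : ℂ) ^ (p i).val) • z i))
    (hexp : ∀ u : L, br h u = (-1 : ℂ) • u → u = ∑ i, B e (br (zstar i) u) • z i)
    :
    ∀ w : L, br h w = w → br e w = 0 →
      ∑ i, br (z i) (br (zstar i) w) =
        ((((Finset.univ.filter fun i => p i = 0).card : ℂ) -
          ((Finset.univ.filter fun i => p i = 1).card : ℂ)) / 2) • br w f := by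
  intro w hhw hew
  have hsq : ∀ a : ZMod 2, a * a = a := by decide
  have hcc : ∀ n : ℕ, ((-1 : ℂ) ^ n) * ((-1 : ℂ) ^ n) = 1 := by
    intro n; rw [← pow_add]; exact Even.neg_one_pow ⟨n, rfl⟩
  -- each bracket [z i, zstar i]
  have hci : ∀ i, br (z i) (zstar i) = (-((-1 : ℂ) ^ (p i).val)) • f := by
    intro i
    obtain ⟨a, ha⟩ := Submodule.mem_span_singleton.mp
      (hm2span (z i) (zstar i) (hzdeg i) (hzsdeg i))
    have hBa : B e (br (z i) (zstar i)) = a := by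
      rw [← ha, map_smul]; simp [hBef]
    have hB2 : B e (br (z i) (zstar i)) = -((-1 : ℂ) ^ (p i).val) := by
      have hs := hskew (p i) (p i) (z i) (hz i) (zstar i) (hzs i)
      rw [hsq] at hs
      rw [hs]
      simp [hdual i i]
    rw [← ha, ← hBa, hB2]
  -- f-bracket antisymmetry against arbitrary w
  have hfw : br f w = -(br w f) := by
    obtain ⟨w0, hw0, w1, hw1, hws⟩ := Submodule.mem_sup.mp
      (hcompl.sup_eq_top ▸ (Submodule.mem_top : w ∈ (⊤ : Submodule ℂ L)))
    have h0 := hskew 0 0 f hfp w0 hw0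
    have h1 := hskew 0 1 f hfp w1 hw1
    have hv0 : ((0 : ZMod 2) * 0).val = 0 := by decide
    have hv1 : ((0 : ZMod 2) * 1).val = 0 := by decide
    rw [hv0] at h0; rw [hv1] at h1
    simp only [pow_zero, one_smul] at h0 h1
    rw [← hws]
    simp only [map_add, LinearMap.add_apply, h0, h1]
    abel
  -- Jacobi step
  have step : ∀ i, br (z i) (br (zstar i) w)
      = (-((-1 : ℂ) ^ (p i).val)) • br f w
        + ((-1 : ℂ) ^ (p i).val) • br (zstar i) (br (z i) w) := by
    intro i
    have hJ := hJac (p i) (p i) (z i) (hz i) (zstar i) (hzs i) w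
    rw [hsq, hci i] at hJ
    simp only [map_smul, LinearMap.smul_apply] at hJ
    exact eq_add_of_sub_eq hJ.symm
  have hsum : ∑ i, br (z i) (br (zstar i) w)
      = (∑ i, -((-1 : ℂ) ^ (p i).val)) • br f w
        + ∑ i, ((-1 : ℂ) ^ (p i).val) • br (zstar i) (br (z i) w) := by
    rw [Finset.sum_congr rfl (fun i _ => step i), Finset.sum_add_distrib,
      Finset.sum_smul]
  -- reindexing via τ
  have hU : ∑ i, ((-1 : ℂ) ^ (p i).val) • br (zstar i) (br (z i) w)
      = - ∑ i, br (z i) (br (zstar i) w) := by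
    have hperm : ∑ i, ((-1 : ℂ) ^ (p (τ i)).val) • br (zstar (τ i)) (br (z (τ i)) w)
        = ∑ i, ((-1 : ℂ) ^ (p i).val) • br (zstar i) (br (z i) w) :=
      Fintype.sum_equiv (Function.Involutive.toPerm τ hτinv) _ _ (fun i => rfl)
    rw [← hperm]
    have hterm : ∀ i, ((-1 : ℂ) ^ (p (τ i)).val) • br (zstar (τ i)) (br (z (τ i)) w)
        = -(br (z i) (br (zstar i) w)) := by
      intro i
      rw [hτp i, hτ2 i, ← hτ1 i]
      simp only [map_neg, map_smul, LinearMap.neg_apply, LinearMap.smul_apply,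
        smul_neg, smul_smul, hcc, one_smul]
    rw [Finset.sum_congr rfl (fun i _ => hterm i)]
    rw [Finset.sum_neg_distrib]
  -- put everything together
  set T := ∑ i, br (z i) (br (zstar i) w) with hT
  have h2T : (2 : ℂ) • T = (∑ i, -((-1 : ℂ) ^ (p i).val)) • br f w := by
    rw [two_smul]
    calc T + T = ((∑ i, -((-1 : ℂ) ^ (p i).val)) • br f w + -T) + T := by
          nth_rewrite 1 [hsum]; rw [hU]
      _ = (∑ i, -((-1 : ℂ) ^ (p i).val)) • br f w := by abel
  have hcoef : (∑ i, -((-1 : ℂ) ^ (p i).val))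
      = ((Finset.univ.filter fun i => p i = 1).card : ℂ)
        - ((Finset.univ.filter fun i => p i = 0).card : ℂ) := by
    have hval : ∀ i : ι, -((-1 : ℂ) ^ (p i).val) = if p i = 0 then -1 else 1 := by
      intro i
      rcases (by decide : ∀ a : ZMod 2, a = 0 ∨ a = 1) (p i) with hpi | hpi <;>
        simp [hpi, ZMod.val_one]
    rw [Finset.sum_congr rfl (fun i _ => hval i), Finset.sum_ite,
      Finset.sum_const, Finset.sum_const]
    have hfe : (Finset.univ.filter fun i => ¬ p i = 0)
        = Finset.univ.filter fun i => p i = 1 := by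
      apply Finset.filter_congr
      intro i _
      rcases (by decide : ∀ a : ZMod 2, a = 0 ∨ a = 1) (p i) with hpi | hpi <;>
        simp [hpi]
    rw [hfe]
    simp [nsmul_eq_mul]
    ring
  have hfinal : (2 : ℂ) • T = (((Finset.univ.filter fun i => p i = 0).card : ℂ)
      - ((Finset.univ.filter fun i => p i = 1).card : ℂ)) • br w f := by
    rw [h2T, hcoef, hfw]
    rw [smul_neg, ← neg_smul]
    ring_nf
  calc T = ((2 : ℂ)⁻¹ * 2) • T := by norm_num
    _ = (2 : ℂ)⁻¹ • ((2 : ℂ) • T) := by rw [mul_smul]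
    _ = (2 : ℂ)⁻¹ • ((((Finset.univ.filter fun i => p i = 0).card : ℂ)
          - ((Finset.univ.filter fun i => p i = 1).card : ℂ)) • br w f) := by rw [hfinal]
    _ = ((((Finset.univ.filter fun i => p i = 0).card : ℂ)
          - ((Finset.univ.filter fun i => p i = 1).card : ℂ)) / 2) • br w f := by
        rw [smul_smul]; ring_nf
end

section
/- Let g be a Lie superalgebra with sl2-triple (e,h,f), minimal grading, even supersymmetric invariant form (·,·) with (e,f)=1, and dual homogeneous bases {z_α}, {z_α*} of g(−1) relative to ⟨x,y⟩=(e,[x,y]). Then for every homogeneous x ∈ g(1) with [e,x]=0: Σ_{α∈S(−1)} (h, [x, z_α*])·z_α = (−1)^{|x|}·[x,f]. -/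
theorem stmt11
    {L : Type*} [AddCommGroup L] [Module ℂ L]
    (br : L →ₗ[ℂ] L →ₗ[ℂ] L)
    (Lp : ZMod 2 → Submodule ℂ L)
    (hcompl : IsCompl (Lp 0) (Lp 1))
    (hbrp : ∀ (i j : ZMod 2), ∀ x ∈ Lp i, ∀ y ∈ Lp j, br x y ∈ Lp (i + j))
    (hskew : ∀ (i j : ZMod 2), ∀ x ∈ Lp i, ∀ y ∈ Lp j,
      br x y = -(((-1 : ℂ) ^ (i * j).val) • br y x))
    (hJac : ∀ (i j : ZMod 2), ∀ x ∈ Lp i, ∀ y ∈ Lp j, ∀ w : L,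
      br (br x y) w = br x (br y w) - ((-1 : ℂ) ^ (i * j).val) • br y (br x w))
    (B : L →ₗ[ℂ] L →ₗ[ℂ] ℂ)
    (hBeven : ∀ x ∈ Lp 0, ∀ y ∈ Lp 1, B x y = 0 ∧ B y x = 0)
    (hBsuper : ∀ (i j : ZMod 2), ∀ x ∈ Lp i, ∀ y ∈ Lp j,
      B x y = ((-1 : ℂ) ^ (i * j).val) * B y x)
    (hBinv : ∀ a b c : L, B (br a b) c = B a (br b c))
    (e h f : L) (hep : e ∈ Lp 0) (hhp : h ∈ Lp 0) (hfp : f ∈ Lp 0)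
    (hef : br e f = h) (hhe : br h e = (2 : ℂ) • e) (hhf : br h f = (-2 : ℂ) • f)
    (hBef : B e f = 1)
    {ι : Type*} [Fintype ι] [DecidableEq ι]
    (p : ι → ZMod 2) (z zstar : ι → L)
    (hz : ∀ i, z i ∈ Lp (p i)) (hzs : ∀ i, zstar i ∈ Lp (p i))
    (hzdeg : ∀ i, br h (z i) = (-1 : ℂ) • z i)
    (hzsdeg : ∀ i, br h (zstar i) = (-1 : ℂ) • zstar i)
    (hdual : ∀ i j, B e (br (zstar i) (z j)) = if i = j then (1 : ℂ) else 0)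
    (hm2span : ∀ x y : L, br h x = (-1 : ℂ) • x → br h y = (-1 : ℂ) • y →
      br x y ∈ Submodule.span ℂ ({f} : Set L))
    (hexp : ∀ u : L, br h u = (-1 : ℂ) • u → u = ∑ i, B e (br (zstar i) u) • z i)
    :
    ∀ (k : ZMod 2), ∀ x ∈ Lp k, br h x = x → br e x = 0 →
      ∑ j, B h (br x (zstar j)) • z j = ((-1 : ℂ) ^ k.val) • br x f := by
  intro k x hx hhx hex
  have hxe : br x e = 0 := by
    rw [hskew k 0 x hx e hep, hex]; simp
  have hfe : br f e = -h := by
    have hs := hskew 0 0 f hfp e hep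
    rw [hef] at hs
    simpa using hs
  -- eigenvalue of br x f
  have hhxf : br h (br x f) = (-1 : ℂ) • br x f := by
    have j := hJac 0 k h hhp x hx f
    rw [hhx, hhf, map_smul] at j
    have h0 : (((0:ZMod 2)) * k).val = 0 := by simp
    rw [h0, pow_zero, one_smul] at j
    have j2 := eq_sub_iff_add_eq.mp j
    rw [← j2]; module
  -- key scalar identity
  have key : ∀ j, B h (br x (zstar j))
      = ((-1 : ℂ) ^ (k * p j).val) * B e (br (zstar j) (br x f)) := by
    intro j
    have hzsj := hzs j
    have hY : br x (zstar j) ∈ Lp (k + p j) := hbrp k (p j) x hx (zstar j) hzsj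
    have s1 : B h (br x (zstar j)) = B e (br f (br x (zstar j))) := by
      rw [← hef, hBinv]
    have s2 : br f (br x (zstar j)) = -br (br x (zstar j)) f := by
      have := hskew 0 (k + p j) f hfp (br x (zstar j)) hY
      simpa using this
    have s3 : br (br x (zstar j)) f
        = br x (br (zstar j) f) - ((-1:ℂ) ^ (k * p j).val) • br (zstar j) (br x f) :=
      hJac k (p j) x hx (zstar j) hzsj f
    have hzsh : br (zstar j) h = zstar j := by
      have := hskew (p j) 0 (zstar j) hzsj h hhp
      rw [hzsdeg j] at this
      simpa using this
    have s5 : B e (br x (br (zstar j) f)) = 0 := by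
      have hw : br (zstar j) f ∈ Lp (p j) := by
        simpa using hbrp (p j) 0 (zstar j) hzsj f hfp
      have hxw : br x (br (zstar j) f) ∈ Lp (k + p j) := hbrp k (p j) x hx _ hw
      have t1 : B e (br x (br (zstar j) f)) = B (br x (br (zstar j) f)) e := by
        have := hBsuper 0 (k + p j) e hep _ hxw
        simpa using this
      rw [t1, hBinv]
      have jac2 : br (br (zstar j) f) e
          = br (zstar j) (br f e) - ((-1:ℂ) ^ ((p j) * 0).val) • br f (br (zstar j) e) :=
        hJac (p j) 0 (zstar j) hzsj f hfp e
      have hp0 : ((p j) * (0:ZMod 2)).val = 0 := by simp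
      rw [hp0, pow_zero, one_smul, hfe] at jac2
      have t2 : br (zstar j) (-h) = -zstar j := by
        rw [map_neg, hzsh]
      rw [t2] at jac2
      have hu : br (zstar j) e ∈ Lp (p j) := by
        simpa using hbrp (p j) 0 (zstar j) hzsj e hep
      have t3 : br f (br (zstar j) e) = -br (br (zstar j) e) f := by
        have := hskew 0 (p j) f hfp _ hu
        simpa using this
      have t4 : br x (br (zstar j) e) = br (br x (zstar j)) e := by
        have jac3 := hJac k (p j) x hx (zstar j) hzsj e
        rw [hxe] at jac3
        simp at jac3
        rw [jac3]
      have t5 : B x (br (br (zstar j) e) f) = B x (zstar j) := by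
        rw [← hBinv x, t4, hBinv, hef, hBinv, hzsh]
      rw [jac2, t3]
      rw [map_sub, map_neg, map_neg, t5]
      ring
    rw [s1, s2, s3]
    simp only [map_neg, map_sub, map_smul, s5, smul_eq_mul]
    ring
  have hkk : ∀ m : ZMod 2, (m * m).val = m.val := by decide
  -- each summand
  have term : ∀ j, B h (br x (zstar j)) • z j
      = ((-1 : ℂ) ^ k.val) • (B e (br (zstar j) (br x f)) • z j) := by
    intro j
    rw [key j, mul_smul]
    by_cases hpk : p j = k
    · rw [hpk, hkk k]
    · have hmem : br (zstar j) (br x f) ∈ Lp 1 := by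
        have h1 : br x f ∈ Lp k := by simpa using hbrp k 0 x hx f hfp
        have hm := hbrp (p j) k (zstar j) (hzs j) (br x f) h1
        have hall : ∀ a b : ZMod 2, a ≠ b → a + b = 1 := by decide
        have hpk1 : p j + k = 1 := hall _ _ hpk
        rwa [hpk1] at hm
      have hz0 := (hBeven e hep _ hmem).1
      rw [hz0]
      simp
  calc ∑ j, B h (br x (zstar j)) • z j
      = ∑ j, ((-1 : ℂ) ^ k.val) • (B e (br (zstar j) (br x f)) • z j) :=
        Finset.sum_congr rfl fun j _ => term j
    _ = ((-1 : ℂ) ^ k.val) • ∑ j, B e (br (zstar j) (br x f)) • z j := by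
        rw [Finset.smul_sum]
    _ = ((-1 : ℂ) ^ k.val) • br x f := by
        rw [← hexp (br x f) hhxf]
end

section
/- Let A be an associative superalgebra over ℂ, B ⊆ A a unital subsuperalgebra, and v ∈ A an odd element such that v² = (1/2)·1, [v, b] = 0 (supercommutator) for all b ∈ B, and A = B ⊕ Bv as a vector space. If I ⊆ B is a two-sided ideal of B of codimension 1, then I ⊕ Iv is a two-sided ideal of A of codimension 2. In particular, A admits a 2-dimensional quotient. -/
theorem stmt16 {A : Type*} [Ring A] [Algebra ℂ A]
    (A0 A1 : Submodule ℂ A)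
    (hone : (1 : A) ∈ A0)
    (hAmul00 : ∀ x ∈ A0, ∀ y ∈ A0, x * y ∈ A0)
    (hAmul01 : ∀ x ∈ A0, ∀ y ∈ A1, x * y ∈ A1)
    (hAmul10 : ∀ x ∈ A1, ∀ y ∈ A0, x * y ∈ A1)
    (hAmul11 : ∀ x ∈ A1, ∀ y ∈ A1, x * y ∈ A0)
    (B : Subalgebra ℂ A)
    (hBsub : ∀ x ∈ B, ∃ x0 x1 : A, x0 ∈ B ∧ x0 ∈ A0 ∧ x1 ∈ B ∧ x1 ∈ A1 ∧ x = x0 + x1)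
    (v : A) (hv : v ∈ A1)
    (hv2 : v * v = algebraMap ℂ A (1 / 2))
    (hcomm0 : ∀ x ∈ B, x ∈ A0 → v * x - x * v = 0)
    (hcomm1 : ∀ x ∈ B, x ∈ A1 → v * x + x * v = 0)
    (hdec : ∀ x : A, ∃ b ∈ B, ∃ b' ∈ B, x = b + b' * v)
    (hindep : ∀ b ∈ B, ∀ b' ∈ B, b + b' * v = 0 → b = 0 ∧ b' = 0)
    (I : Submodule ℂ A)
    (hIB : I ≤ Subalgebra.toSubmodule B)
    (hIgraded : ∀ x ∈ I, ∃ x0 ∈ I, ∃ x1 ∈ I, x0 ∈ A0 ∧ x1 ∈ A1 ∧ x = x0 + x1)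
    (hIdeal : ∀ x ∈ I, ∀ b ∈ B, b * x ∈ I ∧ x * b ∈ I)
    (hcodim : Module.finrank ℂ
      (↥(Subalgebra.toSubmodule B) ⧸ I.comap (Subalgebra.toSubmodule B).subtype) = 1) :
    (∀ x : A, ∀ y ∈ I ⊔ Submodule.map (LinearMap.mulRight ℂ v) I,
      x * y ∈ I ⊔ Submodule.map (LinearMap.mulRight ℂ v) I ∧
      y * x ∈ I ⊔ Submodule.map (LinearMap.mulRight ℂ v) I) ∧
    Module.finrank ℂ (A ⧸ (I ⊔ Submodule.map (LinearMap.mulRight ℂ v) I)) = 2 := by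
  set J := I ⊔ Submodule.map (LinearMap.mulRight ℂ v) I with hJdef
  -- basic membership lemmas for J
  have hmemJ : ∀ i ∈ I, ∀ i' ∈ I, i + i' * v ∈ J := by
    intro i hi i' hi'
    exact Submodule.add_mem _ (Submodule.mem_sup_left hi)
      (Submodule.mem_sup_right ⟨i', hi', rfl⟩)
  have hJdec : ∀ y ∈ J, ∃ i ∈ I, ∃ i' ∈ I, y = i + i' * v := by
    intro y hy
    rw [hJdef, Submodule.mem_sup] at hy
    obtain ⟨i, hi, z, hz, rfl⟩ := hy
    obtain ⟨i', hi', rfl⟩ := hz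
    exact ⟨i, hi, i', hi', rfl⟩
  -- scalar fact
  have hscal : ∀ x : A, x * (v * v) = (1 / 2 : ℂ) • x := by
    intro x
    rw [hv2, ← Algebra.commutes, ← Algebra.smul_def]
  -- swap lemmas
  have hswapB : ∀ b ∈ B, ∃ c ∈ B, v * b = c * v := by
    intro b hb
    obtain ⟨b0, b1, hb0B, hb0, hb1B, hb1, rfl⟩ := hBsub b hb
    refine ⟨b0 - b1, B.sub_mem hb0B hb1B, ?_⟩
    have e0 : v * b0 = b0 * v := sub_eq_zero.mp (hcomm0 b0 hb0B hb0)
    have e1 : v * b1 = -(b1 * v) := eq_neg_of_add_eq_zero_left (hcomm1 b1 hb1B hb1)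
    rw [mul_add, e0, e1, sub_mul]
    abel
  have hswapI : ∀ i ∈ I, ∃ j ∈ I, v * i = j * v := by
    intro i hi
    obtain ⟨i0, hi0, i1, hi1, hg0, hg1, rfl⟩ := hIgraded i hi
    refine ⟨i0 - i1, I.sub_mem hi0 hi1, ?_⟩
    have e0 : v * i0 = i0 * v := sub_eq_zero.mp (hcomm0 i0 (hIB hi0) hg0)
    have e1 : v * i1 = -(i1 * v) := eq_neg_of_add_eq_zero_left (hcomm1 i1 (hIB hi1) hg1)
    rw [mul_add, e0, e1, sub_mul]
    abel
  -- closure properties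
  have hL : ∀ b ∈ B, ∀ y ∈ J, b * y ∈ J := by
    intro b hb y hy
    obtain ⟨i, hi, i', hi', rfl⟩ := hJdec y hy
    have : b * (i + i' * v) = b * i + (b * i') * v := by rw [mul_add, mul_assoc]
    rw [this]
    exact hmemJ _ ((hIdeal i hi b hb).1) _ ((hIdeal i' hi' b hb).1)
  have hLv : ∀ y ∈ J, v * y ∈ J := by
    intro y hy
    obtain ⟨i, hi, i', hi', rfl⟩ := hJdec y hy
    obtain ⟨j, hj, hvj⟩ := hswapI i hi
    obtain ⟨j', hj', hvj'⟩ := hswapI i' hi'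
    have : v * (i + i' * v) = (1 / 2 : ℂ) • j' + j * v := by
      rw [mul_add, hvj, ← mul_assoc, hvj', mul_assoc, hscal]
      abel
    rw [this]
    exact hmemJ _ (I.smul_mem _ hj') _ hj
  have hR : ∀ b ∈ B, ∀ y ∈ J, y * b ∈ J := by
    intro b hb y hy
    obtain ⟨i, hi, i', hi', rfl⟩ := hJdec y hy
    obtain ⟨c, hc, hvc⟩ := hswapB b hb
    have : (i + i' * v) * b = i * b + (i' * c) * v := by
      rw [add_mul, mul_assoc, hvc, ← mul_assoc]
    rw [this]
    exact hmemJ _ ((hIdeal i hi b hb).2) _ ((hIdeal i' hi' c hc).2)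
  have hRv : ∀ y ∈ J, y * v ∈ J := by
    intro y hy
    obtain ⟨i, hi, i', hi', rfl⟩ := hJdec y hy
    have : (i + i' * v) * v = (1 / 2 : ℂ) • i' + i * v := by
      rw [add_mul, mul_assoc, hscal]
      abel
    rw [this]
    exact hmemJ _ (I.smul_mem _ hi') _ hi
  have hIdealJ : ∀ x : A, ∀ y ∈ J, x * y ∈ J ∧ y * x ∈ J := by
    intro x y hy
    obtain ⟨b, hb, b', hb', rfl⟩ := hdec x
    constructor
    · have : (b + b' * v) * y = b * y + b' * (v * y) := by
        rw [add_mul, mul_assoc]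
      rw [this]
      exact J.add_mem (hL b hb y hy) (hL b' hb' _ (hLv y hy))
    · have : y * (b + b' * v) = y * b + (y * b') * v := by
        rw [mul_add, mul_assoc]
      rw [this]
      exact J.add_mem (hR b hb y hy) (hRv _ (hR b' hb' y hy))
  refine ⟨hIdealJ, ?_⟩
  -- codimension argument
  have hnot1 : (1 : A) ∉ I := by
    intro h1
    have htop : I.comap (Subalgebra.toSubmodule B).subtype = ⊤ := by
      rw [Submodule.eq_top_iff']
      intro ⟨x, hx⟩
      have := (hIdeal 1 h1 x hx).1
      simpa using this
    rw [htop] at hcodim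
    have : Subsingleton (↥(Subalgebra.toSubmodule B) ⧸
        (⊤ : Submodule ℂ ↥(Subalgebra.toSubmodule B))) :=
      Submodule.Quotient.subsingleton_iff.mpr rfl
    rw [Module.finrank_zero_of_subsingleton] at hcodim
    exact zero_ne_one hcodim
  -- any element of B is congruent to a scalar mod I
  have hkey : ∀ b ∈ B, ∃ c : ℂ, b - c • (1 : A) ∈ I := by
    intro b hb
    set Qm := I.comap (Subalgebra.toSubmodule B).subtype with hQm
    have h1B : (1 : A) ∈ Subalgebra.toSubmodule B := B.one_mem
    have hmk1 : (Submodule.Quotient.mk (⟨1, h1B⟩ : ↥(Subalgebra.toSubmodule B)) :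
        ↥(Subalgebra.toSubmodule B) ⧸ Qm) ≠ 0 := by
      rw [Ne, Submodule.Quotient.mk_eq_zero]
      exact fun h => hnot1 h
    obtain ⟨c, hc⟩ := (finrank_eq_one_iff_of_nonzero' _ hmk1).mp hcodim
      (Submodule.Quotient.mk (⟨b, hb⟩ : ↥(Subalgebra.toSubmodule B)))
    refine ⟨c, ?_⟩
    rw [← Submodule.Quotient.mk_smul, Submodule.Quotient.eq] at hc
    have := hc
    simpa using I.neg_mem this
  -- scalars: s • 1 + t • v ∈ J → s = 0 ∧ t = 0
  have hscalJ : ∀ s t : ℂ, s • (1 : A) + t • v ∈ J → s = 0 ∧ t = 0 := by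
    intro s t hst
    obtain ⟨i, hi, i', hi', heq⟩ := hJdec _ hst
    have hiB : i ∈ B := hIB hi
    have hi'B : i' ∈ B := hIB hi'
    have hz : (s • (1 : A) - i) + (t • (1 : A) - i') * v = 0 := by
      rw [sub_mul, smul_mul_assoc, one_mul]
      have : s • (1 : A) - i + (t • v - i' * v) = (s • (1 : A) + t • v) - (i + i' * v) := by
        abel
      rw [this, heq, sub_self]
    obtain ⟨h1, h2⟩ := hindep _ (B.sub_mem (B.smul_mem B.one_mem s) hiB) _
      (B.sub_mem (B.smul_mem B.one_mem t) hi'B) hz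
    have hsI : s • (1 : A) ∈ I := by rw [sub_eq_zero] at h1; rw [h1]; exact hi
    have htI : t • (1 : A) ∈ I := by rw [sub_eq_zero] at h2; rw [h2]; exact hi'
    constructor
    · by_contra hs
      exact hnot1 (by simpa [hs] using I.smul_mem s⁻¹ hsI)
    · by_contra ht
      exact hnot1 (by simpa [ht] using I.smul_mem t⁻¹ htI)
  -- basis of the quotient
  set e : Fin 2 → A ⧸ J := ![Submodule.Quotient.mk 1, Submodule.Quotient.mk v] with he
  have hind : LinearIndependent ℂ e := by
    rw [he, LinearIndependent.pair_iff]
    intro s t hst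
    rw [← Submodule.Quotient.mk_smul, ← Submodule.Quotient.mk_smul,
      ← Submodule.Quotient.mk_add] at hst
    exact hscalJ s t ((Submodule.Quotient.mk_eq_zero J).mp hst)
  have hspan : ⊤ ≤ Submodule.span ℂ (Set.range e) := by
    rintro x -
    obtain ⟨x, rfl⟩ := Submodule.Quotient.mk_surjective J x
    obtain ⟨b, hb, b', hb', rfl⟩ := hdec x
    obtain ⟨c, hc⟩ := hkey b hb
    obtain ⟨c', hc'⟩ := hkey b' hb'
    have hmkeq : (Submodule.Quotient.mk (b + b' * v) : A ⧸ J) = c • e 0 + c' • e 1 := by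
      have he0 : e 0 = Submodule.Quotient.mk 1 := rfl
      have he1 : e 1 = Submodule.Quotient.mk v := rfl
      rw [he0, he1, ← Submodule.Quotient.mk_smul, ← Submodule.Quotient.mk_smul,
        ← Submodule.Quotient.mk_add, Submodule.Quotient.eq]
      have hrw : b + b' * v - (c • (1 : A) + c' • v)
          = (b - c • (1 : A)) + ((b' - c' • (1 : A)) * v) := by
        rw [sub_mul, smul_mul_assoc, one_mul]
        abel
      rw [hrw]
      exact hmemJ _ hc _ hc'
    rw [hmkeq]
    exact Submodule.add_mem _ (Submodule.smul_mem _ _ (Submodule.subset_span ⟨0, rfl⟩))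
      (Submodule.smul_mem _ _ (Submodule.subset_span ⟨1, rfl⟩))
  let bas : Module.Basis (Fin 2) ℂ (A ⧸ J) := Module.Basis.mk hind hspan
  rw [Module.finrank_eq_card_basis bas]
  simp
end

section
/- Let g be a Lie superalgebra with even supersymmetric invariant form (·,·), sl2-triple (e,h,f) with (e,f)=1 and minimal grading, and dual homogeneous bases {z_α}, {z_α*} of g(−1) with respect to ⟨x,y⟩=(e,[x,y]). Then for every homogeneous x ∈ g(1) with [e,x]=0: Σ_{α∈S(−1)} (h, [x, z_α])·z_α* = −[x,f]. -/
theorem stmt17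
    {L : Type*} [AddCommGroup L] [Module ℂ L]
    (br : L →ₗ[ℂ] L →ₗ[ℂ] L)
    (Lp : ZMod 2 → Submodule ℂ L)
    (hcompl : IsCompl (Lp 0) (Lp 1))
    (hbrp : ∀ (i j : ZMod 2), ∀ x ∈ Lp i, ∀ y ∈ Lp j, br x y ∈ Lp (i + j))
    (hskew : ∀ (i j : ZMod 2), ∀ x ∈ Lp i, ∀ y ∈ Lp j,
      br x y = -(((-1 : ℂ) ^ (i * j).val) • br y x))
    (hJac : ∀ (i j : ZMod 2), ∀ x ∈ Lp i, ∀ y ∈ Lp j, ∀ w : L,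
      br (br x y) w = br x (br y w) - ((-1 : ℂ) ^ (i * j).val) • br y (br x w))
    (B : L →ₗ[ℂ] L →ₗ[ℂ] ℂ)
    (hBeven : ∀ x ∈ Lp 0, ∀ y ∈ Lp 1, B x y = 0 ∧ B y x = 0)
    (hBsuper : ∀ (i j : ZMod 2), ∀ x ∈ Lp i, ∀ y ∈ Lp j,
      B x y = ((-1 : ℂ) ^ (i * j).val) * B y x)
    (hBinv : ∀ a b c : L, B (br a b) c = B a (br b c))
    (e h f : L) (hep : e ∈ Lp 0) (hhp : h ∈ Lp 0) (hfp : f ∈ Lp 0)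
    (hef : br e f = h) (hhe : br h e = (2 : ℂ) • e) (hhf : br h f = (-2 : ℂ) • f)
    (hBef : B e f = 1)
    {ι : Type*} [Fintype ι] [DecidableEq ι]
    (p : ι → ZMod 2) (z zstar : ι → L)
    (hz : ∀ i, z i ∈ Lp (p i)) (hzs : ∀ i, zstar i ∈ Lp (p i))
    (hzdeg : ∀ i, br h (z i) = (-1 : ℂ) • z i)
    (hzsdeg : ∀ i, br h (zstar i) = (-1 : ℂ) • zstar i)
    (hdual : ∀ i j, B e (br (zstar i) (z j)) = if i = j then (1 : ℂ) else 0)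
    (hm2span : ∀ x y : L, br h x = (-1 : ℂ) • x → br h y = (-1 : ℂ) • y →
      br x y ∈ Submodule.span ℂ ({f} : Set L))
    (τ : ι → ι) (hτinv : ∀ i, τ (τ i) = i) (hτp : ∀ i, p (τ i) = p i)
    (hτ1 : ∀ i, zstar i = z (τ i))
    (hτ2 : ∀ i, zstar (τ i) = -(((-1 : ℂ) ^ (p i).val) • z i))
    (hexp : ∀ u : L, br h u = (-1 : ℂ) • u → u = ∑ i, B e (br (zstar i) u) • z i)
    :
    ∀ (k : ZMod 2), ∀ x ∈ Lp k, br h x = x → br e x = 0 →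
      ∑ j, B h (br x (z j)) • zstar j = -(br x f) := by

  intro k x hx hhx hex
  -- z i vanishes when p i = 0
  have hz0 : ∀ i, p i = 0 → z i = 0 := by
    intro i hpi
    have h1 : zstar (τ i) = z i := by rw [hτ1 (τ i), hτinv]
    have h2 : zstar (τ i) = -z i := by
      rw [hτ2 i, hpi]
      simp
    have h4 : z i = -z i := h1.symm.trans h2
    have h5 : (2 : ℂ) • z i = 0 := by
      rw [two_smul]
      nth_rewrite 1 [h4]
      abel
    rcases smul_eq_zero.mp h5 with h6 | h6
    · norm_num at h6
    · exact h6
  have hfx : br x f = -(br f x) := by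
    have hs := hskew k 0 x hx f hfp
    simpa using hs
  have hhw : br h (br f x) = (-1 : ℂ) • (br f x) := by
    have hj := hJac 0 0 h hhp f hfp x
    rw [hhf, hhx] at hj
    simp only [map_smul, LinearMap.smul_apply, mul_zero, ZMod.val_zero, pow_zero,
      one_smul] at hj
    have h7 := eq_sub_iff_add_eq.mp hj
    rw [← h7]
    module
  have hswap : ∑ j, B h (br x (z j)) • zstar j = ∑ j, B h (br x (zstar j)) • z j := by
    rw [← Equiv.sum_comp (Function.Involutive.toPerm τ hτinv)
      (fun j => B h (br x (z j)) • zstar j)]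
    refine Finset.sum_congr rfl fun j _ => ?_
    have h8 : zstar (τ j) = z j := by rw [hτ1 (τ j), hτinv]
    show B h (br x (z (τ j))) • zstar (τ j) = B h (br x (zstar j)) • z j
    rw [h8, ← hτ1 j]
  have hpt : ∀ j, B h (br x (zstar j)) = B e (br (zstar j) (br f x)) := by
    intro j
    rcases (by decide : ∀ a : ZMod 2, a = 0 ∨ a = 1) (p j) with hpj | hpj
    · have h9 : zstar j = 0 := by
        rw [hτ1 j]
        exact hz0 (τ j) (by rw [hτp]; exact hpj)
      simp [h9]
    · rcases (by decide : ∀ a : ZMod 2, a = 0 ∨ a = 1) k with hk | hk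
      · subst hk
        have hxz : br x (zstar j) ∈ Lp 1 := by
          have := hbrp 0 (p j) x hx (zstar j) (hzs j)
          rwa [hpj, zero_add] at this
        have hwp : br f x ∈ Lp 0 := by
          have := hbrp 0 0 f hfp x hx
          rwa [add_zero] at this
        have hzw : br (zstar j) (br f x) ∈ Lp 1 := by
          have := hbrp (p j) 0 (zstar j) (hzs j) (br f x) hwp
          rwa [hpj, add_zero] at this
        rw [(hBeven h hhp _ hxz).1, (hBeven e hep _ hzw).1]
      · subst hk
        have hwp : br f x ∈ Lp 1 := by
          have := hbrp 0 1 f hfp x hx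
          rwa [zero_add] at this
        have e1 : B h (br x (zstar j)) = B e (br f (br x (zstar j))) := by
          rw [← hef, hBinv]
        have e2 : br f (br x (zstar j)) =
            br (br f x) (zstar j) + br x (br f (zstar j)) := by
          have hj2 := hJac 0 1 f hfp x hx (zstar j)
          simp only [zero_mul, ZMod.val_zero, pow_zero, one_smul] at hj2
          rw [hj2]
          abel
        have e3 : B e (br x (br f (zstar j))) = 0 := by
          rw [← hBinv, hex]
          simp
        have e4 : br (br f x) (zstar j) = br (zstar j) (br f x) := by
          have hs2 := hskew 1 1 (br f x) hwp (zstar j) (hpj ▸ hzs j)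
          rw [hs2, (by decide : ((1 : ZMod 2) * 1).val = 1)]
          simp
        rw [e1, e2, map_add, e3, add_zero, e4]
  rw [hfx, neg_neg, hswap]
  rw [Finset.sum_congr rfl fun j _ => by rw [hpt j]]
  exact (hexp _ hhw).symm
end
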